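/- Let H^J be a weighted constraint graph (edge potential J, with J(i,j) = -infinity for hard constraints) without self-loops, having at least one hard constraint. If for some edge {i,j} of H^J every H^J-coloring sigma of the supergraph G_{ij} satisfies J(sigma_i, sigma_j) + J(sigma_{i'}, sigma_{j'}) = J(sigma_{i'}, sigma_j) + J(sigma_i, sigma_{j'}), then every H^J-coloring sigma of the double-duplicate graph G_{ij}^2 satisfies J(sigma_{i'}, sigma_{j'}) + J(sigma_{i''}, sigma_{j''}) = J(sigma_{i''}, sigma_{j'}) + J(sigma_{i'}, sigma_{j''}). -/
import Mathlib


/-- Adjacency of the supergraph `G_{ij}` of the constraint graph with compatibility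
relation `compat`: the duplicates `i' = inr false`, `j' = inr true` have the same
neighborhoods as `i`, `j`, except that the edge `{i', j'}` is absent. -/
def GijAdj {q : ℕ} (compat : Fin q → Fin q → Prop) (i j : Fin q) :
    (Fin q ⊕ Bool) → (Fin q ⊕ Bool) → Prop
  | Sum.inl a, Sum.inl b => compat a b
  | Sum.inl a, Sum.inr c => compat (if c then j else i) a
  | Sum.inr c, Sum.inl a => compat (if c then j else i) a
  | Sum.inr _, Sum.inr _ => False

/-- Adjacency of the double-duplicate graph `G_{ij}²`: two duplicates of `i`
(`inr (false, ·)`) and two duplicates of `j` (`inr (true, ·)`), each with the same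
neighborhood as the original, and no edges among the four duplicates. -/
def Gij2Adj {q : ℕ} (compat : Fin q → Fin q → Prop) (i j : Fin q) :
    (Fin q ⊕ (Bool × Bool)) → (Fin q ⊕ (Bool × Bool)) → Prop
  | Sum.inl a, Sum.inl b => compat a b
  | Sum.inl a, Sum.inr c => compat (if c.1 then j else i) a
  | Sum.inr c, Sum.inl a => compat (if c.1 then j else i) a
  | Sum.inr _, Sum.inr _ => False

/-- For a loopless weighted constraint graph `H^J` with a hard constraint: if for some
edge `{i,j}` every `H^J`-coloring `σ` of `G_{ij}` satisfies
`J(σ_i,σ_j) + J(σ_{i'},σ_{j'}) = J(σ_{i'},σ_j) + J(σ_i,σ_{j'})`, then every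
`H^J`-coloring of `G_{ij}²` satisfies
`J(σ_{i'},σ_{j'}) + J(σ_{i''},σ_{j''}) = J(σ_{i''},σ_{j'}) + J(σ_{i'},σ_{j''})`. -/
theorem stmt19 (q : ℕ) (compat : Fin q → Fin q → Prop) (hsymm : Symmetric compat)
    (hloopless : ∀ a : Fin q, ¬ compat a a)
    (hhard : ∃ a b : Fin q, ¬ compat a b)
    (J : Fin q → Fin q → ℝ) (hJsym : ∀ a b, J a b = J b a)
    (i j : Fin q) (hij : compat i j)
    (hyp : ∀ σ : (Fin q ⊕ Bool) → Fin q,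
      (∀ a b, GijAdj compat i j a b → compat (σ a) (σ b)) →
      J (σ (Sum.inl i)) (σ (Sum.inl j)) + J (σ (Sum.inr false)) (σ (Sum.inr true)) =
        J (σ (Sum.inr false)) (σ (Sum.inl j)) + J (σ (Sum.inl i)) (σ (Sum.inr true)))
    (σ : (Fin q ⊕ (Bool × Bool)) → Fin q)
    (hσ : ∀ a b, Gij2Adj compat i j a b → compat (σ a) (σ b)) :
    J (σ (Sum.inr (false, false))) (σ (Sum.inr (true, false))) +
        J (σ (Sum.inr (false, true))) (σ (Sum.inr (true, true))) =
      J (σ (Sum.inr (false, true))) (σ (Sum.inr (true, false))) +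
        J (σ (Sum.inr (false, false))) (σ (Sum.inr (true, true))) := by
  have key : ∀ bi bj : Bool,
      J (σ (Sum.inl i)) (σ (Sum.inl j)) + J (σ (Sum.inr (false, bi))) (σ (Sum.inr (true, bj))) =
        J (σ (Sum.inr (false, bi))) (σ (Sum.inl j)) +
          J (σ (Sum.inl i)) (σ (Sum.inr (true, bj))) := by
    intro bi bj
    have := hyp (fun x => match x with
      | Sum.inl a => σ (Sum.inl a)
      | Sum.inr c => σ (Sum.inr (c, if c then bj else bi))) ?_
    · simpa using this
    · intro a b h
      cases a with
      | inl a => cases b with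
        | inl b => exact hσ (Sum.inl a) (Sum.inl b) h
        | inr c => exact hσ (Sum.inl a) (Sum.inr (c, if c then bj else bi)) h
      | inr c => cases b with
        | inl b => exact hσ (Sum.inr (c, if c then bj else bi)) (Sum.inl b) h
        | inr c' => exact absurd h (by cases c <;> cases c' <;> simp [GijAdj])
  have h1 := key false false
  have h2 := key true true
  have h3 := key true false
  have h4 := key false true
  linarith
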